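/- Let w*, λ ∈ appropriate spaces with support S = supp(w*), and suppose α > 0 satisfies α‖w*‖_∞ < min_{j∈S} |⟨X_S† x_j, w*_S⟩| - max_{ℓ∉S} |⟨X_S† x_ℓ, w*_S⟩|, where the right-hand side is assumed positive. Then for the vector u := X (X_Sᵀ)† w*_S - α w*, every coordinate i ∈ S satisfies |u_i| > |u_ℓ| for all ℓ ∉ S; in particular hard-thresholding u at level k = |S| uniquely selects the support S. -/
import Mathlib


open Matrix

noncomputable section

/-- The hard-thresholding set: minimizers of `‖z - u‖₂²` over `k`-sparse `z`. -/
def htSet {d : ℕ} (k : ℕ) (u : Fin d → ℝ) : Set (Fin d → ℝ) :=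
  {z | (Finset.univ.filter fun i => z i ≠ 0).card ≤ k ∧
    ∀ z' : Fin d → ℝ, (Finset.univ.filter fun i => z' i ≠ 0).card ≤ k →
      (∑ i, (z i - u i) ^ 2) ≤ ∑ i, (z' i - u i) ^ 2}

lemma card_sdiff_le' {d : ℕ} {S T : Finset (Fin d)} (h : T.card ≤ S.card) :
    (T \ S).card ≤ (S \ T).card := by
  have h1 : (T \ S).card + (T ∩ S).card = T.card := Finset.card_sdiff_add_card_inter T S
  have h2 : (S \ T).card + (S ∩ T).card = S.card := Finset.card_sdiff_add_card_inter S T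
  rw [Finset.inter_comm] at h2
  omega

lemma ht_unique {d : ℕ} (u : Fin d → ℝ) (S : Finset (Fin d))
    (hsep : ∀ i ∈ S, ∀ ℓ, ℓ ∉ S → |u ℓ| < |u i|) :
    htSet S.card u = {fun i => if i ∈ S then u i else 0} := by
  set v : Fin d → ℝ := fun i => if i ∈ S then u i else 0 with hv
  have decompT : ∀ T : Finset (Fin d),
      ∑ i ∈ Tᶜ, u i ^ 2 = ∑ i ∈ S \ T, u i ^ 2 + ∑ i ∈ Sᶜ \ T, u i ^ 2 := by
    intro T
    rw [← Finset.sum_union (by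
      rw [Finset.disjoint_left]
      intro a ha hb
      simp only [Finset.mem_sdiff, Finset.mem_compl] at ha hb
      tauto)]
    apply Finset.sum_congr _ (fun _ _ => rfl)
    ext i
    simp only [Finset.mem_compl, Finset.mem_union, Finset.mem_sdiff]
    tauto
  have decompS : ∀ T : Finset (Fin d),
      ∑ i ∈ Sᶜ, u i ^ 2 = ∑ i ∈ T \ S, u i ^ 2 + ∑ i ∈ Sᶜ \ T, u i ^ 2 := by
    intro T
    rw [← Finset.sum_union (by
      rw [Finset.disjoint_left]
      intro a ha hb
      simp only [Finset.mem_sdiff, Finset.mem_compl] at ha hb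
      tauto)]
    apply Finset.sum_congr _ (fun _ _ => rfl)
    ext i
    simp only [Finset.mem_compl, Finset.mem_union, Finset.mem_sdiff]
    tauto
  have strict : ∀ T : Finset (Fin d), T.card ≤ S.card → (T \ S).Nonempty →
      ∑ i ∈ T \ S, u i ^ 2 < ∑ i ∈ S \ T, u i ^ 2 := by
    intro T hcard hne
    have hcard' : (T \ S).card ≤ (S \ T).card := card_sdiff_le' hcard
    have hSTne : (S \ T).Nonempty := by
      rw [← Finset.card_pos]
      have := Finset.card_pos.mpr hne
      omega
    obtain ⟨i0, hi0, hmi0⟩ := Finset.exists_mem_eq_inf' hSTne (fun i => u i ^ 2)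
    set m := (S \ T).inf' hSTne (fun i => u i ^ 2) with hm
    have hm0 : 0 ≤ m := by rw [hmi0]; positivity
    have hlt : ∀ ℓ ∈ T \ S, u ℓ ^ 2 < m := by
      intro ℓ hℓ
      rw [hmi0]
      rw [Finset.mem_sdiff] at hℓ
      rw [Finset.mem_sdiff] at hi0
      have hs := hsep i0 hi0.1 ℓ hℓ.2
      calc u ℓ ^ 2 = |u ℓ| ^ 2 := (sq_abs _).symm
        _ < |u i0| ^ 2 := by
            apply pow_lt_pow_left₀ hs (abs_nonneg _)
            norm_num
        _ = u i0 ^ 2 := sq_abs _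
    calc ∑ ℓ ∈ T \ S, u ℓ ^ 2 < ∑ _ℓ ∈ T \ S, m := Finset.sum_lt_sum_of_nonempty hne hlt
      _ = (T \ S).card • m := by rw [Finset.sum_const]
      _ ≤ (S \ T).card • m := by
          rw [nsmul_eq_mul, nsmul_eq_mul]
          exact mul_le_mul_of_nonneg_right (by exact_mod_cast hcard') hm0
      _ = ∑ _i ∈ S \ T, m := by rw [Finset.sum_const]
      _ ≤ ∑ i ∈ S \ T, u i ^ 2 := Finset.sum_le_sum (fun i hi => Finset.inf'_le _ hi)
  have nonstrict : ∀ T : Finset (Fin d), T.card ≤ S.card →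
      ∑ i ∈ T \ S, u i ^ 2 ≤ ∑ i ∈ S \ T, u i ^ 2 := by
    intro T hcard
    rcases Finset.eq_empty_or_nonempty (T \ S) with h | h
    · rw [h, Finset.sum_empty]
      exact Finset.sum_nonneg (fun i _ => sq_nonneg _)
    · exact (strict T hcard h).le
  have cost_eq : ∀ z : Fin d → ℝ,
      ∑ i, (z i - u i) ^ 2 =
        ∑ i ∈ (Finset.univ.filter fun i => z i ≠ 0), (z i - u i) ^ 2 +
        ∑ i ∈ (Finset.univ.filter fun i => z i ≠ 0)ᶜ, u i ^ 2 := by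
    intro z
    rw [← Finset.sum_add_sum_compl (Finset.univ.filter fun i => z i ≠ 0)]
    congr 1
    apply Finset.sum_congr rfl
    intro i hi
    rw [Finset.mem_compl, Finset.mem_filter] at hi
    push_neg at hi
    rw [hi (Finset.mem_univ i)]
    ring
  have costv : ∑ i, (v i - u i) ^ 2 = ∑ i ∈ Sᶜ, u i ^ 2 := by
    rw [← Finset.sum_add_sum_compl S]
    have h1 : ∑ i ∈ S, (v i - u i) ^ 2 = 0 :=
      Finset.sum_eq_zero (fun i hi => by simp [hv, if_pos hi])
    rw [h1, zero_add]
    apply Finset.sum_congr rfl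
    intro i hi
    rw [Finset.mem_compl] at hi
    simp only [hv, if_neg hi]
    ring
  have hvcard : (Finset.univ.filter fun i => v i ≠ 0).card ≤ S.card := by
    apply Finset.card_le_card
    intro i hi
    rw [Finset.mem_filter] at hi
    by_contra h
    exact hi.2 (by simp [hv, if_neg h])
  have hvmem : v ∈ htSet S.card u := by
    refine ⟨hvcard, ?_⟩
    intro z' hz'
    have h1 : ∑ i ∈ Sᶜ, u i ^ 2 ≤
        ∑ i ∈ (Finset.univ.filter fun i => z' i ≠ 0)ᶜ, u i ^ 2 := by
      rw [decompS (Finset.univ.filter fun i => z' i ≠ 0),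
        decompT (Finset.univ.filter fun i => z' i ≠ 0)]
      linarith [nonstrict _ hz']
    have h2 := cost_eq z'
    have h3 : (0:ℝ) ≤ ∑ i ∈ (Finset.univ.filter fun i => z' i ≠ 0), (z' i - u i) ^ 2 :=
      Finset.sum_nonneg (fun i _ => sq_nonneg _)
    rw [costv]
    linarith
  ext z
  simp only [Set.mem_singleton_iff]
  constructor
  · rintro ⟨hzc, hzmin⟩
    set T := Finset.univ.filter fun i => z i ≠ 0 with hT
    have hzv : ∑ i, (z i - u i) ^ 2 ≤ ∑ i, (v i - u i) ^ 2 := hzmin v hvcard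
    have h1 : ∑ i ∈ Sᶜ, u i ^ 2 ≤ ∑ i ∈ Tᶜ, u i ^ 2 := by
      rw [decompS T, decompT T]
      linarith [nonstrict T hzc]
    have h2 := cost_eq z
    have h3 : (0:ℝ) ≤ ∑ i ∈ T, (z i - u i) ^ 2 :=
      Finset.sum_nonneg (fun i _ => sq_nonneg _)
    rw [costv] at hzv
    have hTzero : ∑ i ∈ T, (z i - u i) ^ 2 = 0 := by linarith
    have heq : ∑ i ∈ Tᶜ, u i ^ 2 = ∑ i ∈ Sᶜ, u i ^ 2 := by linarith
    have hzu : ∀ i ∈ T, z i = u i := by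
      intro i hi
      have := (Finset.sum_eq_zero_iff_of_nonneg (fun j _ => sq_nonneg (z j - u j))).mp hTzero i hi
      have := pow_eq_zero_iff (n := 2) (by norm_num) |>.mp this
      linarith [this]
    have hTS : T \ S = ∅ := by
      by_contra h
      have hne := Finset.nonempty_iff_ne_empty.mpr h
      have hst := strict T hzc hne
      have e1 := decompS T
      have e2 := decompT T
      linarith
    have hsum0 : ∑ i ∈ S \ T, u i ^ 2 = 0 := by
      have e1 := decompS T
      have e2 := decompT T
      rw [hTS, Finset.sum_empty] at e1
      linarith
    have hu0 : ∀ i ∈ S \ T, u i = 0 := by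
      intro i hi
      have := (Finset.sum_eq_zero_iff_of_nonneg (fun j _ => sq_nonneg (u j))).mp hsum0 i hi
      have := pow_eq_zero_iff (n := 2) (by norm_num) |>.mp this
      exact this
    have hTsub : T ⊆ S := by
      intro i hi
      by_contra h
      have : i ∈ T \ S := Finset.mem_sdiff.mpr ⟨hi, h⟩
      rw [hTS] at this
      exact absurd this (Finset.notMem_empty i)
    funext i
    by_cases hiT : i ∈ T
    · rw [hzu i hiT]
      simp [hv, if_pos (hTsub hiT)]
    · have hz0 : z i = 0 := by
        by_contra h
        exact hiT (Finset.mem_filter.mpr ⟨Finset.mem_univ i, h⟩)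
      by_cases hiS : i ∈ S
      · have : u i = 0 := hu0 i (Finset.mem_sdiff.mpr ⟨hiS, hiT⟩)
        rw [hz0]
        simp [hv, if_pos hiS, this]
      · rw [hz0]
        simp [hv, if_neg hiS]
  · rintro rfl
    exact hvmem

/-- If `α ‖w*‖_∞ < min_{j∈S} |⟨x_j, (X_Sᵀ)† w*_S⟩| - max_{ℓ∉S} |⟨x_ℓ, (X_Sᵀ)† w*_S⟩|`
then, for `u := Xᵀ (X_Sᵀ)† w*_S - α w*`, every in-support coordinate dominates
every off-support coordinate in magnitude: `|u_i| > |u_ℓ|` for `i ∈ S`, `ℓ ∉ S`;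
in particular hard-thresholding `u` at level `k = |S|` uniquely selects `S`. -/
theorem support_separation {n d : ℕ}
    (X : Matrix (Fin n) (Fin d) ℝ) (S : Finset (Fin d))
    (w : Fin d → ℝ) (α : ℝ) (hα : 0 < α)
    (hsupp : ∀ ℓ, ℓ ∉ S → w ℓ = 0)
    (XS : Matrix (Fin n) S ℝ) (hXS : ∀ i (j : S), XS i j = X i (j : Fin d))
    (XStp : Matrix (Fin n) S ℝ)
    (g1 : XSᵀ * XStp * XSᵀ = XSᵀ) (g2 : XStp * XSᵀ * XStp = XStp)
    (g3 : (XSᵀ * XStp)ᵀ = XSᵀ * XStp) (g4 : (XStp * XSᵀ)ᵀ = XStp * XSᵀ)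
    (p : Fin n → ℝ) (hp : p = XStp.mulVec fun j : S => w (j : Fin d))
    (hcond : ∀ j ∈ S, ∀ ℓ, ℓ ∉ S →
      α * (⨆ i, |w i|) < |Xᵀ.mulVec p j| - |Xᵀ.mulVec p ℓ|) :
    (∀ i ∈ S, ∀ ℓ, ℓ ∉ S →
      |Xᵀ.mulVec p ℓ - α * w ℓ| < |Xᵀ.mulVec p i - α * w i|) ∧
    htSet S.card (fun i => Xᵀ.mulVec p i - α * w i) =
      {fun i => if i ∈ S then Xᵀ.mulVec p i - α * w i else 0} := by
  have hsup : ∀ i, |w i| ≤ ⨆ j, |w j| := fun i =>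
    le_ciSup (f := fun j => |w j|) (Set.Finite.bddAbove (Set.finite_range _)) i
  have hsep : ∀ i ∈ S, ∀ ℓ, ℓ ∉ S →
      |Xᵀ.mulVec p ℓ - α * w ℓ| < |Xᵀ.mulVec p i - α * w i| := by
    intro i hi ℓ hℓ
    have h0 : w ℓ = 0 := hsupp ℓ hℓ
    have hc := hcond i hi ℓ hℓ
    have hmul : α * |w i| ≤ α * ⨆ j, |w j| :=
      mul_le_mul_of_nonneg_left (hsup i) hα.le
    calc |Xᵀ.mulVec p ℓ - α * w ℓ| = |Xᵀ.mulVec p ℓ| := by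
          rw [h0, mul_zero, sub_zero]
      _ < |Xᵀ.mulVec p i| - α * ⨆ j, |w j| := by linarith
      _ ≤ |Xᵀ.mulVec p i| - α * |w i| := by linarith
      _ = |Xᵀ.mulVec p i| - |α * w i| := by rw [abs_mul, abs_of_pos hα]
      _ ≤ |Xᵀ.mulVec p i - α * w i| := abs_sub_abs_le_abs_sub _ _
  exact ⟨hsep, ht_unique _ S hsep⟩
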